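/- arXiv:2604.20566 — 6 statements merged into one kernel-verified Lean document; each statement's English description precedes it below -/
import Mathlib

section
/- Let Λ ∈ ℤⁿ (n=p+q) have strictly decreasing first p coordinates and strictly decreasing last q coordinates, with the first p' coordinates forming a string (consecutive integers decreasing by 1) and the last q' coordinates forming a string, and suppose Λ_{p'} ≤ Λ_{n-q'+1} + 1. If no integer occurs more than once among all n coordinates of Λ, then either Λ_1 < Λ_n, or the concatenated sequence Λ_1, ..., Λ_{p'}, Λ_{n-q'+1}, ..., Λ_n is a single string of consecutive integers decreasing by 1. -/
/-- Regular case: either Λ_1 < Λ_n, or the p'-string and q'-string concatenate to one string. -/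
theorem stmt1 (p q p' q' n : ℕ) (hn : n = p + q)
    (hp : 1 ≤ p) (hq : 1 ≤ q)
    (hp' : 1 ≤ p') (hp'p : p' ≤ p) (hq' : 1 ≤ q') (hq'q : q' ≤ q)
    (Λ : ℕ → ℤ)
    (hL : ∀ i j, 1 ≤ i → i < j → j ≤ p → Λ j < Λ i)
    (hR : ∀ i j, p + 1 ≤ i → i < j → j ≤ n → Λ j < Λ i)
    (hpstr : ∀ i, 1 ≤ i → i < p' → Λ (i + 1) = Λ i - 1)
    (hqstr : ∀ i, n - q' + 1 ≤ i → i < n → Λ (i + 1) = Λ i - 1)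
    (hunit : Λ p' ≤ Λ (n - q' + 1) + 1)
    (hreg : ∀ i j, 1 ≤ i → i ≤ n → 1 ≤ j → j ≤ n → Λ i = Λ j → i = j) :
    Λ 1 < Λ n ∨ Λ (n - q' + 1) = Λ p' - 1 := by
  set m := n - q' + 1 with hm
  have hm1 : p + 1 ≤ m := by omega
  have hm2 : m ≤ n := by omega
  have hA : ∀ i : ℕ, 1 ≤ i → i ≤ p' → Λ i = Λ 1 - ((i : ℤ) - 1) := by
    intro i hi
    induction i, hi using Nat.le_induction with
    | base => intro _; simp
    | succ k hk ih =>
      intro hkp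
      have h := hpstr k hk (by omega)
      rw [h, ih (by omega)]
      push_cast
      ring
  have hB : ∀ i : ℕ, m ≤ i → i ≤ n → Λ i = Λ m - ((i : ℤ) - (m : ℤ)) := by
    intro i hi
    induction i, hi using Nat.le_induction with
    | base => intro _; simp
    | succ k hk ih =>
      intro hkn
      have h := hqstr k hk (by omega)
      rw [h, ih (by omega)]
      push_cast
      ring
  by_contra hcon
  push_neg at hcon
  obtain ⟨h1, h2⟩ := hcon
  have hne : Λ p' ≠ Λ m := by
    intro he
    have := hreg p' m (by omega) (by omega) (by omega) (by omega) he
    omega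
  have hlt : Λ p' < Λ m := by omega
  have hΛp' : Λ p' = Λ 1 - ((p' : ℤ) - 1) := hA p' hp' le_rfl
  have hΛn : Λ n = Λ m - ((n : ℤ) - (m : ℤ)) := hB n hm2 le_rfl
  set v := max (Λ p') (Λ n) with hv
  have hv1 : Λ p' ≤ v := le_max_left _ _
  have hv2 : Λ n ≤ v := le_max_right _ _
  have hv3 : v ≤ Λ 1 := by
    apply max_le <;> omega
  have hv4 : v ≤ Λ m := by
    apply max_le <;> omega
  set i := (Λ 1 - v).toNat + 1 with hi
  have hip : i ≤ p' := by omega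
  have hΛi : Λ i = v := by
    have := hA i (by omega) hip
    rw [this]
    push_cast
    omega
  set j := m + (Λ m - v).toNat with hj
  have hjn : j ≤ n := by omega
  have hΛj : Λ j = v := by
    have := hB j (by omega) hjn
    rw [this]
    push_cast
    omega
  have := hreg i j (by omega) (by omega) (by omega) (by omega) (hΛi.trans hΛj.symm)
  omega
end

section
/- Let Λ ∈ ℤⁿ (n=p+q) with strictly decreasing left block Λ_1 > ... > Λ_p and strictly decreasing right block Λ_{p+1} > ... > Λ_n; suppose each integer value occurs at most twice among the coordinates, at least one value occurs twice, and Λ_{p'} ≤ Λ_{n-q'+1} + 1. If the p'-string and q'-string (as sets) are disjoint, then the concatenation Λ_1, ..., Λ_{p'}, Λ_{n-q'+1}, ..., Λ_n is a string of distinct consecutive integers decreasing by 1. -/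
/-- Singular case: if the p'-string and q'-string are disjoint, their concatenation is a string. -/
theorem stmt2 (p q p' q' n : ℕ) (hn : n = p + q)
    (hp : 1 ≤ p) (hq : 1 ≤ q)
    (hp' : 1 ≤ p') (hp'p : p' ≤ p) (hq' : 1 ≤ q') (hq'q : q' ≤ q)
    (Λ : ℕ → ℤ)
    (hL : ∀ i j, 1 ≤ i → i < j → j ≤ p → Λ j < Λ i)
    (hR : ∀ i j, p + 1 ≤ i → i < j → j ≤ n → Λ j < Λ i)
    (hpstr : ∀ i, 1 ≤ i → i < p' → Λ (i + 1) = Λ i - 1)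
    (hqstr : ∀ i, n - q' + 1 ≤ i → i < n → Λ (i + 1) = Λ i - 1)
    (htwice : ∀ i j k, 1 ≤ i → i < j → j < k → k ≤ n → ¬(Λ i = Λ j ∧ Λ j = Λ k))
    (hsing : ∃ i j, 1 ≤ i ∧ i < j ∧ j ≤ n ∧ Λ i = Λ j)
    (hdisj : ∀ i j, 1 ≤ i → i ≤ p' → n - q' + 1 ≤ j → j ≤ n → Λ i ≠ Λ j)
    (hunit : Λ p' ≤ Λ (n - q' + 1) + 1) :
    Λ (n - q' + 1) = Λ p' - 1 := by
  have leftStr : ∀ d : ℕ, 1 + d ≤ p' → Λ (1 + d) = Λ 1 - d := by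
    intro d
    induction d with
    | zero => intro _; simp
    | succ m ih =>
      intro h
      have h1 := hpstr (1 + m) (by omega) (by omega)
      rw [show 1 + (m + 1) = (1 + m) + 1 from by omega, h1, ih (by omega)]
      push_cast; ring
  have rightStr : ∀ d : ℕ, n - q' + 1 + d ≤ n →
      Λ (n - q' + 1 + d) = Λ (n - q' + 1) - d := by
    intro d
    induction d with
    | zero => intro _; simp
    | succ m ih =>
      intro h
      have h1 := hqstr (n - q' + 1 + m) (by omega) (by omega)
      rw [show n - q' + 1 + (m + 1) = (n - q' + 1 + m) + 1 from by omega, h1,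
        ih (by omega)]
      push_cast; ring
  by_contra hne
  have hge : Λ p' ≤ Λ (n - q' + 1) := by omega
  obtain ⟨i, j, hi1, hij, hjn, hE⟩ := hsing
  have hip : i ≤ p := by
    by_contra hc
    push_neg at hc
    have := hR i j (by omega) hij hjn
    linarith
  have hjp : p + 1 ≤ j := by
    by_contra hc
    push_neg at hc
    have := hL i j hi1 hij (by omega)
    linarith
  rcases le_or_gt i p' with hi' | hi' <;> rcases le_or_gt (n - q' + 1) j with hj' | hj'
  · exact hdisj i j hi1 hi' hj' hjn hE
  · -- i ≤ p', j < n - q' + 1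
    have hjlt : Λ (n - q' + 1) < Λ j := hR j (n - q' + 1) (by omega) hj' (by omega)
    have hΛi := leftStr (i - 1) (by omega)
    rw [show 1 + (i - 1) = i from by omega] at hΛi
    have hΛp' := leftStr (p' - 1) (by omega)
    rw [show 1 + (p' - 1) = p' from by omega] at hΛp'
    have hi0 : (0 : ℤ) ≤ ((i - 1 : ℕ) : ℤ) := Int.natCast_nonneg _
    have hv1 : (0 : ℤ) ≤ Λ 1 - Λ (n - q' + 1) := by linarith
    set t := (Λ 1 - Λ (n - q' + 1)).toNat with ht
    have htz : (t : ℤ) = Λ 1 - Λ (n - q' + 1) := Int.toNat_of_nonneg hv1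
    have htp : (t : ℤ) ≤ ((p' - 1 : ℕ) : ℤ) := by
      rw [htz]; linarith
    have htp' : t ≤ p' - 1 := by exact_mod_cast htp
    have hΛk := leftStr t (by omega)
    have hkval : Λ (1 + t) = Λ (n - q' + 1) := by rw [hΛk, htz]; ring
    exact hdisj (1 + t) (n - q' + 1) (by omega) (by omega) le_rfl (by omega) hkval
  · -- i > p', j ≥ n - q' + 1
    have hilt : Λ i < Λ p' := hL p' i hp' hi' hip
    have hΛj := rightStr (j - (n - q' + 1)) (by omega)
    rw [show n - q' + 1 + (j - (n - q' + 1)) = j from by omega] at hΛj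
    have hv0 : (0 : ℤ) ≤ Λ (n - q' + 1) - Λ p' := by linarith
    set t := (Λ (n - q' + 1) - Λ p').toNat with ht
    have htz : (t : ℤ) = Λ (n - q' + 1) - Λ p' := Int.toNat_of_nonneg hv0
    have htlt : (t : ℤ) < ((j - (n - q' + 1) : ℕ) : ℤ) := by
      rw [htz]; linarith
    have htlt' : t < j - (n - q' + 1) := by exact_mod_cast htlt
    have hΛk := rightStr t (by omega)
    have hkval : Λ (n - q' + 1 + t) = Λ p' := by rw [hΛk, htz]; ring
    exact hdisj p' (n - q' + 1 + t) hp' le_rfl (by omega) (by omega) hkval.symm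
  · have h1 := hL p' i hp' hi' hip
    have h2 := hR j (n - q' + 1) (by omega) hj' (by omega)
    linarith
end

section
/- Let Λ ∈ ℤⁿ be a singular su(p,q) parameter satisfying the unitarity condition Λ_{p'} - Λ_{n-q'+1} ≤ 1, with strictly decreasing left and right blocks. Then every integer value that occurs twice among the coordinates of Λ occurs in the union of the p'-string and the q'-string. -/
/-- Every repeated value occurs in the union of the p'-string and the q'-string. -/
theorem stmt3 (p q p' q' n : ℕ) (hn : n = p + q)
    (hp : 1 ≤ p) (hq : 1 ≤ q)
    (hp' : 1 ≤ p') (hp'p : p' ≤ p) (hq' : 1 ≤ q') (hq'q : q' ≤ q)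
    (Λ : ℕ → ℤ)
    (hL : ∀ i j, 1 ≤ i → i < j → j ≤ p → Λ j < Λ i)
    (hR : ∀ i j, p + 1 ≤ i → i < j → j ≤ n → Λ j < Λ i)
    (hpstr : ∀ i, 1 ≤ i → i < p' → Λ (i + 1) = Λ i - 1)
    (hqstr : ∀ i, n - q' + 1 ≤ i → i < n → Λ (i + 1) = Λ i - 1)
    (hsing : ∃ i j, 1 ≤ i ∧ i < j ∧ j ≤ n ∧ Λ i = Λ j)
    (hunit : Λ p' ≤ Λ (n - q' + 1) + 1) :
    ∀ v : ℤ, ∀ i j, 1 ≤ i → i < j → j ≤ n → Λ i = v → Λ j = v →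
      ∃ k, ((1 ≤ k ∧ k ≤ p') ∨ (n - q' + 1 ≤ k ∧ k ≤ n)) ∧ Λ k = v := by
  intro v i j hi hij hjn hiv hjv
  have hjp : p + 1 ≤ j := by
    by_contra h
    have := hL i j hi hij (by omega)
    omega
  have hip : i ≤ p := by
    by_contra h
    have := hR i j (by omega) hij hjn
    omega
  by_contra hcon
  push_neg at hcon
  have hip' : p' < i := by
    by_contra h
    exact hcon i (Or.inl ⟨hi, by omega⟩) hiv
  have hjq' : j < n - q' + 1 := by
    by_contra h
    exact hcon j (Or.inr ⟨by omega, hjn⟩) hjv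
  have h1 : Λ i < Λ p' := hL p' i hp' hip' hip
  have h2 : Λ (n - q' + 1) < Λ j := hR j (n - q' + 1) hjp (by omega) (by omega)
  omega
end

section
/- Let Λ^dom ∈ ℤⁿ with Λ^dom_1 ≥ ... ≥ Λ^dom_{n-1} ≥ |Λ^dom_n|, all coordinates integers, suppose 0 is not a coordinate, and suppose at least two distinct values are repeated among Λ^dom_1, ..., Λ^dom_{n-1}, |Λ^dom_n|. Then there is no strictly decreasing Λ ∈ ℤⁿ whose multiset of absolute values of coordinates equals that of Λ^dom and which has at most one positive coordinate. -/
lemma aux14 (n : ℕ) (Λ : ℕ → ℤ) (a : ℤ) (ha : 0 < a)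
    (hdec : ∀ i j, 1 ≤ i → i < j → j ≤ n → Λ j < Λ i)
    (hcount : 2 ≤ Multiset.count a ((Finset.Icc 1 n).val.map (fun i => |Λ i|))) :
    ∃ p, p ∈ Finset.Icc 1 n ∧ Λ p = a := by
  have h2 : 1 < ((Finset.Icc 1 n).filter (fun i => a = |Λ i|)).card := by
    rw [Multiset.count_map] at hcount
    have : ((Finset.Icc 1 n).filter (fun i => a = |Λ i|)).card
        = Multiset.card (Multiset.filter (fun i => a = |Λ i|) (Finset.Icc 1 n).val) := by
      rw [Finset.card_def, Finset.filter_val]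
    omega
  obtain ⟨p, hp, q, hq, hpq⟩ := Finset.one_lt_card.mp h2
  simp only [Finset.mem_filter, Finset.mem_Icc] at hp hq
  wlog hlt : p < q generalizing p q
  · exact this q p (Ne.symm hpq) hq hp (by omega)
  have hqp : Λ q < Λ p := hdec p q hp.1.1 hlt hq.1.2
  have h1 := abs_eq ha.le |>.mp hp.2.symm
  have h2 := abs_eq ha.le |>.mp hq.2.symm
  exact ⟨p, Finset.mem_Icc.mpr hp.1, by omega⟩

/-- so*(2n): if at least two distinct values are repeated among the absolute values of the
coordinates of a dominant parameter with no zero coordinate, then no strictly decreasing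
rearrangement-with-signs having at most one positive coordinate exists. -/
theorem stmt14 (n : ℕ) (hn : 2 ≤ n) (Λdom : ℕ → ℤ)
    (hdom : ∀ i j, 1 ≤ i → i ≤ j → j ≤ n - 1 → Λdom j ≤ Λdom i)
    (hdomn : |Λdom n| ≤ Λdom (n - 1))
    (hzero : ∀ i, 1 ≤ i → i ≤ n → Λdom i ≠ 0)
    (hrep : ∃ i j k l, 1 ≤ i ∧ i < j ∧ j ≤ n ∧ 1 ≤ k ∧ k < l ∧ l ≤ n ∧
      |Λdom i| = |Λdom j| ∧ |Λdom k| = |Λdom l| ∧ |Λdom i| ≠ |Λdom k|) :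
    ¬ ∃ Λ : ℕ → ℤ,
      (∀ i j, 1 ≤ i → i < j → j ≤ n → Λ j < Λ i) ∧
      ((Finset.Icc 1 n).val.map (fun i => |Λ i|) =
        (Finset.Icc 1 n).val.map (fun i => |Λdom i|)) ∧
      ((Finset.Icc 1 n).filter (fun i => 0 < Λ i)).card ≤ 1 := by
  rintro ⟨Λ, hdec, hmul, hpos⟩
  obtain ⟨i, j, k, l, hi1, hij, hjn, hk1, hkl, hln, hija, hkla, hne⟩ := hrep
  have key : ∀ i j : ℕ, 1 ≤ i → i < j → j ≤ n → |Λdom i| = |Λdom j| →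
      2 ≤ Multiset.count |Λdom i| ((Finset.Icc 1 n).val.map (fun x => |Λ x|)) := by
    intro i j h1 h2 h3 heq
    rw [hmul, Multiset.count_map]
    have hsub : ({i, j} : Finset ℕ) ⊆
        (Finset.Icc 1 n).filter (fun x => |Λdom i| = |Λdom x|) := by
      intro x hx
      simp only [Finset.mem_insert, Finset.mem_singleton] at hx
      simp only [Finset.mem_filter, Finset.mem_Icc]
      rcases hx with rfl | rfl
      · exact ⟨⟨h1, by omega⟩, rfl⟩
      · exact ⟨⟨by omega, h3⟩, heq⟩
    have hc := Finset.card_le_card hsub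
    rw [Finset.card_insert_of_notMem (by simp; omega), Finset.card_singleton] at hc
    have : ((Finset.Icc 1 n).filter (fun x => |Λdom i| = |Λdom x|)).card
        = Multiset.card (Multiset.filter (fun x => |Λdom i| = |Λdom x|)
          (Finset.Icc 1 n).val) := by
      rw [Finset.card_def, Finset.filter_val]
    omega
  have hai : |Λdom i| ≠ 0 := abs_ne_zero.mpr (hzero i hi1 (by omega))
  have hak : |Λdom k| ≠ 0 := abs_ne_zero.mpr (hzero k hk1 (by omega))
  obtain ⟨p, hp, hpa⟩ := aux14 n Λ |Λdom i| (lt_of_le_of_ne (abs_nonneg _) (Ne.symm hai)) hdec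
    (key i j hi1 hij hjn hija)
  obtain ⟨q, hq, hqa⟩ := aux14 n Λ |Λdom k| (lt_of_le_of_ne (abs_nonneg _) (Ne.symm hak)) hdec
    (key k l hk1 hkl hln hkla)
  have hpq : p ≠ q := fun h => hne (by rw [← hpa, ← hqa, h])
  have h2 : 2 ≤ ((Finset.Icc 1 n).filter (fun i => 0 < Λ i)).card := by
    apply Finset.one_lt_card.mpr
    refine ⟨p, ?_, q, ?_, hpq⟩ <;> simp only [Finset.mem_filter]
    · exact ⟨hp, by rw [hpa]; exact lt_of_le_of_ne (abs_nonneg _) (Ne.symm hai)⟩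
    · exact ⟨hq, by rw [hqa]; exact lt_of_le_of_ne (abs_nonneg _) (Ne.symm hak)⟩
  omega
end

section
/- Let n ≥ 3 and ρ = (n-1, n-2, ..., 1, 0) ∈ ℤⁿ. For each q with 3 ≤ q ≤ n, the tuple Λ = (q-1, 0, -1, ..., -(q-2), -q, -(q+1), ..., -(n-1)) is strictly decreasing, is a conjugate of ρ under the Weyl group of type D_n (permutations with an even number of sign changes), and satisfies Λ_1 + Λ_2 = q - 1, i.e., the boundary of the unitarity condition Λ_1 + Λ_2 ≤ q-1 for the q-case. -/
/-- so*(2n), q-edge points of the Hasse diagram of ρ: the tuple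
(q-1, 0, -1, ..., -(q-2), -q, ..., -(n-1)) is strictly decreasing, is a D_n Weyl group
conjugate of ρ = (n-1, ..., 1, 0), and satisfies Λ_1 + Λ_2 = q - 1. -/
theorem stmt16 (n q : ℕ) (hn : 3 ≤ n) (hq3 : 3 ≤ q) (hqn : q ≤ n)
    (ρ Λ : Fin n → ℤ)
    (hρ : ∀ i : Fin n, ρ i = (n : ℤ) - 1 - ((i : ℕ) : ℤ))
    (hΛ : ∀ i : Fin n, Λ i = if (i : ℕ) = 0 then (q : ℤ) - 1
      else if (i : ℕ) < q then 1 - ((i : ℕ) : ℤ) else -((i : ℕ) : ℤ)) :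
    (∀ i j : Fin n, i < j → Λ j < Λ i) ∧
    (∃ (σ : Equiv.Perm (Fin n)) (ε : Fin n → ℤ),
      (∀ i, ε i = 1 ∨ ε i = -1) ∧
      Even ((Finset.univ.filter (fun i => ε i = -1)).card) ∧
      (∀ i, Λ i = ε i * ρ (σ i))) ∧
    Λ ⟨0, by omega⟩ + Λ ⟨1, by omega⟩ = (q : ℤ) - 1 := by
  refine ⟨?_, ?_, ?_⟩
  · intro i j hij
    have hij' : (i : ℕ) < (j : ℕ) := hij
    have hjn := j.isLt
    rw [hΛ i, hΛ j]
    split_ifs <;> omega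
  · -- the permutation
    set f : Fin n → Fin n := fun i =>
      if h0 : (i : ℕ) = 0 then ⟨n - q, by omega⟩
      else if h1 : (i : ℕ) < q then ⟨n - (i : ℕ), by have := i.isLt; omega⟩
      else ⟨n - 1 - (i : ℕ), by have := i.isLt; omega⟩ with hf
    have hinj : Function.Injective f := by
      intro a b hab
      have ha := a.isLt; have hb := b.isLt
      simp only [hf] at hab
      split_ifs at hab <;>
        (apply Fin.ext; rw [Fin.mk.injEq] at hab; omega)
    let σ : Equiv.Perm (Fin n) := Equiv.ofBijective f (Finite.injective_iff_bijective.mp hinj)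
    have hσ : ∀ i, σ i = f i := fun _ => rfl
    set ε : Fin n → ℤ := fun i =>
      if (i : ℕ) = 0 then 1 else if (i : ℕ) = 1 ∧ n % 2 = 0 then 1 else -1 with hε
    -- general cardinality lemma
    have hgen : ∀ k : ℕ, k ≤ n →
        (Finset.univ.filter (fun i : Fin n => k ≤ (i : ℕ))).card = n - k := by
      intro k hk
      have hcompl : Finset.univ.filter (fun i : Fin n => ¬ k ≤ (i : ℕ))
          = Finset.attachFin (Finset.range k) (fun m hm => by
              rw [Finset.mem_range] at hm; omega) := by
        ext i
        simp [Finset.mem_attachFin]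
      have hcards := Finset.card_filter_add_card_filter_not
        (s := (Finset.univ : Finset (Fin n))) (p := fun i : Fin n => k ≤ (i : ℕ))
      rw [hcompl, Finset.card_attachFin, Finset.card_range, Finset.card_univ,
        Fintype.card_fin] at hcards
      omega
    refine ⟨σ, ε, ?_, ?_, ?_⟩
    · intro i
      simp only [hε]
      split_ifs
      exacts [Or.inl rfl, Or.inl rfl, Or.inr rfl]
    · by_cases hpar : n % 2 = 0
      · have hset : Finset.univ.filter (fun i : Fin n => ε i = -1)
            = Finset.univ.filter (fun i : Fin n => 2 ≤ (i : ℕ)) := by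
          ext i
          simp only [Finset.mem_filter, Finset.mem_univ, true_and, hε]
          split_ifs <;> constructor <;> intro h <;> first | exact h.elim | omega
        rw [hset, hgen 2 (by omega), Nat.even_iff]
        omega
      · have hset : Finset.univ.filter (fun i : Fin n => ε i = -1)
            = Finset.univ.filter (fun i : Fin n => 1 ≤ (i : ℕ)) := by
          ext i
          simp only [Finset.mem_filter, Finset.mem_univ, true_and, hε]
          split_ifs <;> constructor <;> intro h <;> first | exact h.elim | omega
        rw [hset, hgen 1 (by omega), Nat.even_iff]
        omega
    · intro i
      have hi := i.isLt
      rw [hΛ i, hρ, hσ i]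
      simp only [hf, hε]
      by_cases h0 : (i : ℕ) = 0
      · simp only [dif_pos h0, if_pos h0, Fin.val_mk]
        omega
      · simp only [dif_neg h0, if_neg h0]
        by_cases h1 : (i : ℕ) < q
        · simp only [dif_pos h1, if_pos h1, Fin.val_mk]
          split_ifs with h2 <;> omega
        · simp only [dif_neg h1, if_neg h1, Fin.val_mk]
          split_ifs with h2 <;> omega
  · have h0 : Λ ⟨0, by omega⟩ = (q : ℤ) - 1 := by
      rw [hΛ ⟨0, by omega⟩]
      norm_num
    have h1 : Λ ⟨1, by omega⟩ = 0 := by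
      rw [hΛ ⟨1, by omega⟩]
      rw [if_neg (by show ¬ (1 : ℕ) = 0; omega), if_pos (by show (1 : ℕ) < q; omega)]
      norm_num
    rw [h0, h1]
    ring
end

section
/- Let n = p + q, p ≤ q, and let Λ^dom ∈ ℤⁿ be strictly decreasing (regular) with Λ^dom_q ≠ Λ^dom_{q+1} + 1. Then the only rearrangement Λ of the coordinates of Λ^dom with strictly decreasing first p coordinates, strictly decreasing last q coordinates, and satisfying the su(p,q) unitarity condition (existence of p' ∈ [1,p], q' ∈ [1,q] such that the first p' coordinates and last q' coordinates are strings of consecutive integers decreasing by 1, Λ_{p'+1} < Λ_1 - p', Λ_{n-q'} > Λ_n + q', and Λ_{p'} - Λ_{n-q'+1} ≤ 1) is Λ = (Λ^dom_{q+1}, ..., Λ^dom_n | Λ^dom_1, ..., Λ^dom_q). -/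
/-- Two strictly decreasing enumerations of the same multiset of integers agree pointwise. -/
lemma block_eq (k : ℕ) : ∀ (f g : ℕ → ℤ) (a c : ℕ),
    (∀ i j, a ≤ i → i < j → j < a + k → f j < f i) →
    (∀ i j, c ≤ i → i < j → j < c + k → g j < g i) →
    (Finset.Ico a (a + k)).val.map f = (Finset.Ico c (c + k)).val.map g →
    ∀ i, i < k → f (a + i) = g (c + i) := by
  induction k with
  | zero => intro _ _ _ _ _ _ _ i hi; exact absurd hi (by omega)
  | succ k ih =>
    intro f g a c hf hg hm i hik
    have hsf : (Finset.Ico a (a + (k + 1))).val = (a + k) ::ₘ (Finset.Ico a (a + k)).val := by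
      have e : a + (k + 1) = (a + k) + 1 := by omega
      rw [e, Nat.Ico_succ_right_eq_insert_Ico (by omega),
        Finset.insert_val_of_notMem (by simp)]
    have hsg : (Finset.Ico c (c + (k + 1))).val = (c + k) ::ₘ (Finset.Ico c (c + k)).val := by
      have e : c + (k + 1) = (c + k) + 1 := by omega
      rw [e, Nat.Ico_succ_right_eq_insert_Ico (by omega),
        Finset.insert_val_of_notMem (by simp)]
    rw [hsf, hsg, Multiset.map_cons, Multiset.map_cons] at hm
    have hfg : f (a + k) = g (c + k) := by
      have h1 : f (a + k) ∈ g (c + k) ::ₘ (Finset.Ico c (c + k)).val.map g := by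
        rw [← hm]; exact Multiset.mem_cons_self _ _
      have h2 : g (c + k) ∈ f (a + k) ::ₘ (Finset.Ico a (a + k)).val.map f := by
        rw [hm]; exact Multiset.mem_cons_self _ _
      have key1 : g (c + k) ≤ f (a + k) := by
        rcases Multiset.mem_cons.mp h1 with h | h
        · exact le_of_eq h.symm
        · obtain ⟨j, hj, hje⟩ := Multiset.mem_map.mp h
          rw [Finset.mem_val, Finset.mem_Ico] at hj
          have := hg j (c + k) hj.1 hj.2 (by omega)
          omega
      have key2 : f (a + k) ≤ g (c + k) := by
        rcases Multiset.mem_cons.mp h2 with h | h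
        · exact le_of_eq h.symm
        · obtain ⟨j, hj, hje⟩ := Multiset.mem_map.mp h
          rw [Finset.mem_val, Finset.mem_Ico] at hj
          have := hf j (a + k) hj.1 hj.2 (by omega)
          omega
      omega
    rw [hfg] at hm
    have hm' := (Multiset.cons_inj_right _).mp hm
    rcases Nat.lt_or_ge i k with h | h
    · exact ih f g a c (fun i j h1 h2 h3 => hf i j h1 h2 (by omega))
        (fun i j h1 h2 h3 => hg i j h1 h2 (by omega)) hm' i h
    · have hik' : i = k := by omega
      rw [hik']; exact hfg

/-- su(p,q), regular integral case with Λdom_q ≠ Λdom_{q+1} + 1: the only unitary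
rearrangement is (Λdom_{q+1}, ..., Λdom_n | Λdom_1, ..., Λdom_q). -/
theorem stmt18 (p q n : ℕ) (hn : n = p + q) (hp : 1 ≤ p) (hpq : p ≤ q)
    (Λdom : ℕ → ℤ)
    (hdom : ∀ i j, 1 ≤ i → i < j → j ≤ n → Λdom j < Λdom i)
    (hgap : Λdom q ≠ Λdom (q + 1) + 1)
    (Λ : ℕ → ℤ)
    (hperm : (Finset.Icc 1 n).val.map Λ = (Finset.Icc 1 n).val.map Λdom)
    (hL : ∀ i j, 1 ≤ i → i < j → j ≤ p → Λ j < Λ i)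
    (hR : ∀ i j, p + 1 ≤ i → i < j → j ≤ n → Λ j < Λ i)
    (hunit : ∃ p' q', 1 ≤ p' ∧ p' ≤ p ∧ 1 ≤ q' ∧ q' ≤ q ∧
      (∀ i, 1 ≤ i → i < p' → Λ (i + 1) = Λ i - 1) ∧
      (∀ i, n - q' + 1 ≤ i → i < n → Λ (i + 1) = Λ i - 1) ∧
      (p' < p → Λ (p' + 1) < Λ 1 - (p' : ℤ)) ∧
      (q' < q → Λ (n - q') > Λ n + (q' : ℤ)) ∧
      Λ p' ≤ Λ (n - q' + 1) + 1) :
    (∀ i, 1 ≤ i → i ≤ p → Λ i = Λdom (q + i)) ∧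
    (∀ j, 1 ≤ j → j ≤ q → Λ (p + j) = Λdom j) := by
  classical
  obtain ⟨p', q', hp'1, hp'p, hq'1, hq'q, hls, hrs, _, _, hcond⟩ := hunit
  have hq1 : 1 ≤ q := le_trans hp hpq
  -- the gap
  have ggap : Λdom (q + 1) + 2 ≤ Λdom q := by
    have := hdom q (q + 1) (by omega) (by omega) (by omega)
    omega
  -- Λdom is injective on [1, n]
  have hdominj : ∀ i ∈ (Finset.Icc 1 n).val, ∀ j ∈ (Finset.Icc 1 n).val,
      Λdom i = Λdom j → i = j := by
    intro i hi j hj hije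
    rw [Finset.mem_val, Finset.mem_Icc] at hi hj
    rcases lt_trichotomy i j with h | h | h
    · have := hdom i j (by omega) h (by omega); omega
    · exact h
    · have := hdom j i (by omega) h (by omega); omega
  have hnddom : ((Finset.Icc 1 n).val.map Λdom).Nodup :=
    Multiset.Nodup.map_on hdominj (Finset.Icc 1 n).nodup
  have hndΛ : ((Finset.Icc 1 n).val.map Λ).Nodup := by rw [hperm]; exact hnddom
  have hΛinj : ∀ i, 1 ≤ i → i ≤ n → ∀ j, 1 ≤ j → j ≤ n → Λ i = Λ j → i = j := by
    intro i h1 h2 j h3 h4 hije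
    exact Multiset.inj_on_of_nodup_map hndΛ i
      (by rw [Finset.mem_val, Finset.mem_Icc]; omega) j
      (by rw [Finset.mem_val, Finset.mem_Icc]; omega) hije
  -- every Λ-value is a Λdom-value
  have hval : ∀ k, 1 ≤ k → k ≤ n → ∃ j, 1 ≤ j ∧ j ≤ n ∧ Λ k = Λdom j := by
    intro k h1 h2
    have hmem : Λ k ∈ (Finset.Icc 1 n).val.map Λdom := by
      rw [← hperm]
      exact Multiset.mem_map_of_mem Λ (by rw [Finset.mem_val, Finset.mem_Icc]; omega)
    obtain ⟨j, hj, hje⟩ := Multiset.mem_map.mp hmem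
    rw [Finset.mem_val, Finset.mem_Icc] at hj
    exact ⟨j, hj.1, hj.2, hje.symm⟩
  -- no Λ-value lies strictly inside the gap
  have hnig : ∀ k, 1 ≤ k → k ≤ n → Λ k ≤ Λdom (q + 1) ∨ Λdom q ≤ Λ k := by
    intro k h1 h2
    obtain ⟨j, hj1, hj2, hje⟩ := hval k h1 h2
    rcases le_or_gt j q with h | h
    · right
      rcases eq_or_lt_of_le h with h' | h'
      · rw [hje, h']
      · have := hdom j q hj1 h' (by omega); omega
    · left
      rcases eq_or_lt_of_le (show q + 1 ≤ j by omega) with h' | h'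
      · rw [hje, ← h']
      · have := hdom (q + 1) j (by omega) h' (by omega); omega
  -- closed form for the left string
  have lstr : ∀ t, t < p' → Λ (t + 1) = Λ 1 - (t : ℤ) := by
    intro t
    induction t with
    | zero => intro _; norm_num
    | succ t ih =>
      intro h
      have h1 : Λ (t + 1 + 1) = Λ (t + 1) - 1 := hls (t + 1) (by omega) (by omega)
      have h2 := ih (by omega)
      push_cast
      omega
  -- closed form for the right (tail) string
  have rstr : ∀ t, t < q' → Λ (n - t) = Λ n + (t : ℤ) := by
    intro t
    induction t with
    | zero => intro _; norm_num
    | succ t ih =>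
      intro h
      have h1 : Λ (n - (t + 1) + 1) = Λ (n - (t + 1)) - 1 :=
        hrs (n - (t + 1)) (by omega) (by omega)
      rw [show n - (t + 1) + 1 = n - t by omega] at h1
      have h2 := ih (by omega)
      push_cast
      omega
  -- endpoints of the two strings
  have hp'n : Λ p' = Λ 1 - ((p' - 1 : ℕ) : ℤ) := by
    have := lstr (p' - 1) (by omega)
    rwa [show p' - 1 + 1 = p' by omega] at this
  have hq'n : Λ (n - q' + 1) = Λ n + ((q' - 1 : ℕ) : ℤ) := by
    have := rstr (q' - 1) (by omega)
    rwa [show n - (q' - 1) = n - q' + 1 by omega] at this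
  -- key dichotomy
  have key : Λ 1 ≤ Λdom (q + 1) ∨ Λdom q ≤ Λ n := by
    have bad : Λdom q ≤ Λ 1 → Λ n ≤ Λdom (q + 1) → False := by
      intro hb hs
      have c1 : Λdom q ≤ Λ p' := by
        by_contra hc
        push_neg at hc
        have hsmall : Λ p' ≤ Λdom (q + 1) := by
          rcases hnig p' (by omega) (by omega) with h | h
          · exact h
          · omega
        have h3 : (Λ 1 - (Λdom (q + 1) + 1)).toNat < p' := by omega
        have h4 := lstr (Λ 1 - (Λdom (q + 1) + 1)).toNat h3
        have h5 : Λ ((Λ 1 - (Λdom (q + 1) + 1)).toNat + 1) = Λdom (q + 1) + 1 := by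
          rw [h4]; omega
        rcases hnig ((Λ 1 - (Λdom (q + 1) + 1)).toNat + 1) (by omega) (by omega)
          with h | h <;> omega
      have c2 : Λ (n - q' + 1) ≤ Λdom (q + 1) := by
        by_contra hc
        push_neg at hc
        have hbig : Λdom q ≤ Λ (n - q' + 1) := by
          rcases hnig (n - q' + 1) (by omega) (by omega) with h | h
          · omega
          · exact h
        have h3 : (Λdom (q + 1) + 1 - Λ n).toNat < q' := by omega
        have h4 := rstr (Λdom (q + 1) + 1 - Λ n).toNat h3
        have h5 : Λ (n - (Λdom (q + 1) + 1 - Λ n).toNat) = Λdom (q + 1) + 1 := by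
          rw [h4]; omega
        rcases hnig (n - (Λdom (q + 1) + 1 - Λ n).toNat) (by omega) (by omega)
          with h | h <;> omega
      omega
    rcases hnig 1 le_rfl (by omega) with h | h
    · exact Or.inl h
    · rcases hnig n (by omega) le_rfl with h' | h'
      · exact (bad h h').elim
      · exact Or.inr h'
  -- injectivity on subintervals, as InjOn
  have injΛdom : ∀ a b : ℕ, 1 ≤ a → b ≤ n + 1 →
      Set.InjOn Λdom (Finset.Ico a b : Finset ℕ) := by
    intro a b ha hb x hx y hy hxy
    simp only [Finset.coe_Ico, Set.mem_Ico] at hx hy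
    rcases lt_trichotomy x y with h | h | h
    · have := hdom x y (by omega) h (by omega); omega
    · exact h
    · have := hdom y x (by omega) h (by omega); omega
  have injΛ : ∀ a b : ℕ, 1 ≤ a → b ≤ n + 1 →
      Set.InjOn Λ (Finset.Ico a b : Finset ℕ) := by
    intro a b ha hb x hx y hy hxy
    simp only [Finset.coe_Ico, Set.mem_Ico] at hx hy
    exact hΛinj x (by omega) (by omega) y (by omega) (by omega) hxy
  -- cardinalities
  have cardVB : ((Finset.Ico (q + 1) (n + 1)).image Λdom).card = p := by
    rw [Finset.card_image_of_injOn (injΛdom (q + 1) (n + 1) (by omega) le_rfl),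
      Nat.card_Ico]
    omega
  have cardVT : ((Finset.Ico 1 (q + 1)).image Λdom).card = q := by
    rw [Finset.card_image_of_injOn (injΛdom 1 (q + 1) le_rfl (by omega)), Nat.card_Ico]
    omega
  have cardLF : ((Finset.Ico 1 (p + 1)).image Λ).card = p := by
    rw [Finset.card_image_of_injOn (injΛ 1 (p + 1) le_rfl (by omega)), Nat.card_Ico]
    omega
  have cardRF : ((Finset.Ico (p + 1) (n + 1)).image Λ).card = q := by
    rw [Finset.card_image_of_injOn (injΛ (p + 1) (n + 1) (by omega) le_rfl), Nat.card_Ico]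
    omega
  -- every Λ-value is in the top or bottom value set
  have memTB : ∀ k, 1 ≤ k → k ≤ n →
      Λ k ∈ (Finset.Ico 1 (q + 1)).image Λdom ∨
      Λ k ∈ (Finset.Ico (q + 1) (n + 1)).image Λdom := by
    intro k h1 h2
    obtain ⟨j, hj1, hj2, hje⟩ := hval k h1 h2
    rcases le_or_gt j q with h | h
    · exact Or.inl (Finset.mem_image.mpr ⟨j, by rw [Finset.mem_Ico]; omega, hje.symm⟩)
    · exact Or.inr (Finset.mem_image.mpr ⟨j, by rw [Finset.mem_Ico]; omega, hje.symm⟩)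
  have VBsmall : ∀ v ∈ (Finset.Ico (q + 1) (n + 1)).image Λdom, v ≤ Λdom (q + 1) := by
    intro v hv
    obtain ⟨j, hj, rfl⟩ := Finset.mem_image.mp hv
    rw [Finset.mem_Ico] at hj
    rcases eq_or_lt_of_le hj.1 with h | h
    · rw [← h]
    · exact le_of_lt (hdom (q + 1) j (by omega) h (by omega))
  have VTbig : ∀ v ∈ (Finset.Ico 1 (q + 1)).image Λdom, Λdom q ≤ v := by
    intro v hv
    obtain ⟨j, hj, rfl⟩ := Finset.mem_image.mp hv
    rw [Finset.mem_Ico] at hj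
    rcases eq_or_lt_of_le (show j ≤ q by omega) with h | h
    · rw [h]
    · exact le_of_lt (hdom j q hj.1 h (by omega))
  -- the left block is exactly the bottom values
  have LFeq : (Finset.Ico 1 (p + 1)).image Λ = (Finset.Ico (q + 1) (n + 1)).image Λdom := by
    rcases key with hk | hk
    · apply Finset.eq_of_subset_of_card_le _ (by rw [cardVB, cardLF])
      intro v hv
      obtain ⟨i, hi, rfl⟩ := Finset.mem_image.mp hv
      rw [Finset.mem_Ico] at hi
      have hsm : Λ i ≤ Λdom (q + 1) := by
        rcases eq_or_lt_of_le hi.1 with h | h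
        · rw [← h]; exact hk
        · exact le_trans (le_of_lt (hL 1 i le_rfl h (by omega))) hk
      rcases memTB i (by omega) (by omega) with h | h
      · exact absurd hsm (by have := VTbig _ h; omega)
      · exact h
    · have RFeq : (Finset.Ico (p + 1) (n + 1)).image Λ
          = (Finset.Ico 1 (q + 1)).image Λdom := by
        apply Finset.eq_of_subset_of_card_le _ (by rw [cardVT, cardRF])
        intro v hv
        obtain ⟨i, hi, rfl⟩ := Finset.mem_image.mp hv
        rw [Finset.mem_Ico] at hi
        have hbg : Λdom q ≤ Λ i := by
          rcases eq_or_lt_of_le (show i ≤ n by omega) with h | h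
          · rw [h]; exact hk
          · exact le_trans hk (le_of_lt (hR i n (by omega) h le_rfl))
        rcases memTB i (by omega) (by omega) with h | h
        · exact h
        · exact absurd hbg (by have := VBsmall _ h; omega)
      apply Finset.eq_of_subset_of_card_le _ (by rw [cardVB, cardLF])
      intro v hv
      obtain ⟨i, hi, rfl⟩ := Finset.mem_image.mp hv
      rw [Finset.mem_Ico] at hi
      rcases memTB i (by omega) (by omega) with h | h
      · exfalso
        rw [← RFeq] at h
        obtain ⟨i', hi', he⟩ := Finset.mem_image.mp h
        rw [Finset.mem_Ico] at hi'
        have := hΛinj i' (by omega) (by omega) i (by omega) (by omega) he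
        omega
      · exact h
  -- the right block is exactly the top values
  have RFeq : (Finset.Ico (p + 1) (n + 1)).image Λ = (Finset.Ico 1 (q + 1)).image Λdom := by
    apply Finset.eq_of_subset_of_card_le _ (by rw [cardVT, cardRF])
    intro v hv
    obtain ⟨i, hi, rfl⟩ := Finset.mem_image.mp hv
    rw [Finset.mem_Ico] at hi
    rcases memTB i (by omega) (by omega) with h | h
    · exact h
    · exfalso
      rw [← LFeq] at h
      obtain ⟨i', hi', he⟩ := Finset.mem_image.mp h
      rw [Finset.mem_Ico] at hi'
      have := hΛinj i' (by omega) (by omega) i (by omega) (by omega) he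
      omega
  -- multiset versions
  have mB : (Finset.Ico 1 (p + 1)).val.map Λ
      = (Finset.Ico (q + 1) (n + 1)).val.map Λdom := by
    rw [← Finset.image_val_of_injOn (injΛ 1 (p + 1) le_rfl (by omega)),
      ← Finset.image_val_of_injOn (injΛdom (q + 1) (n + 1) (by omega) le_rfl)]
    exact congrArg Finset.val LFeq
  have mT : (Finset.Ico (p + 1) (n + 1)).val.map Λ
      = (Finset.Ico 1 (q + 1)).val.map Λdom := by
    rw [← Finset.image_val_of_injOn (injΛ (p + 1) (n + 1) (by omega) le_rfl),
      ← Finset.image_val_of_injOn (injΛdom 1 (q + 1) le_rfl (by omega))]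
    exact congrArg Finset.val RFeq
  -- conclude pointwise
  have left_eq : ∀ i, i < p → Λ (1 + i) = Λdom (q + 1 + i) := by
    refine block_eq p Λ Λdom 1 (q + 1)
      (fun i j h1 h2 h3 => hL i j h1 h2 (by omega))
      (fun i j h1 h2 h3 => hdom i j (by omega) h2 (by omega)) ?_
    rw [show 1 + p = p + 1 by omega, show q + 1 + p = n + 1 by omega]
    exact mB
  have right_eq : ∀ i, i < q → Λ (p + 1 + i) = Λdom (1 + i) := by
    refine block_eq q Λ Λdom (p + 1) 1
      (fun i j h1 h2 h3 => hR i j h1 h2 (by omega))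
      (fun i j h1 h2 h3 => hdom i j h1 h2 (by omega)) ?_
    rw [show p + 1 + q = n + 1 by omega, show 1 + q = q + 1 by omega]
    exact mT
  constructor
  · intro i h1 h2
    have := left_eq (i - 1) (by omega)
    rwa [show 1 + (i - 1) = i by omega, show q + 1 + (i - 1) = q + i by omega] at this
  · intro j h1 h2
    have := right_eq (j - 1) (by omega)
    rwa [show p + 1 + (j - 1) = p + j by omega, show 1 + (j - 1) = j by omega] at this
end
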